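/- If G is a cubic graph that is not bipartite, then the 3-coalition number of G satisfies C_3(G) = 3. -/

import Mathlib

open SimpleGraph

/-- A set `S` is a `k`-dominating set of `G` if every vertex outside `S`
has at least `k` neighbors in `S`. -/
def KDominatingSet {V : Type*} (G : SimpleGraph V) (k : ℕ) (S : Set V) : Prop :=
  ∀ v ∉ S, k ≤ (S ∩ G.neighborSet v).ncard

/-- Two disjoint sets `A` and `B` form a `k`-coalition in `G` if neither is a
`k`-dominating set of `G` but their union is. -/
def KCoalition {V : Type*} (G : SimpleGraph V) (k : ℕ) (A B : Set V) : Prop :=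
  Disjoint A B ∧ ¬ KDominatingSet G k A ∧ ¬ KDominatingSet G k B ∧
    KDominatingSet G k (A ∪ B)

/-- A `k`-coalition partition of `G` is a partition of the vertex set in which every
part is either a `k`-dominating set of cardinality `k` or forms a `k`-coalition with
another part. -/
def KCoalitionPartition {V : Type*} (G : SimpleGraph V) (k : ℕ) (P : Finset (Set V)) : Prop :=
  (∀ A ∈ P, A.Nonempty) ∧
  (P : Set (Set V)).PairwiseDisjoint id ∧
  (⋃ A ∈ P, A) = (Set.univ : Set V) ∧
  ∀ A ∈ P, (KDominatingSet G k A ∧ A.ncard = k) ∨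
    ∃ B ∈ P, B ≠ A ∧ KCoalition G k A B

/-- The `k`-coalition number of `G`: the maximum cardinality of a
`k`-coalition partition of `G`. -/
noncomputable def kCoalitionNumber {V : Type*} (G : SimpleGraph V) (k : ℕ) : ℕ :=
  sSup {n | ∃ P : Finset (Set V), KCoalitionPartition G k P ∧ P.card = n}

section Aux

variable {V : Type*} [Fintype V] (G : SimpleGraph V) [DecidableRel G.Adj]

private lemma ncard_nbhd (v : V) : (G.neighborSet v).ncard = G.degree v := by
  rw [Set.ncard_eq_toFinset_card', SimpleGraph.degree]
  rfl

private lemma dom_iff (h3 : ∀ v, G.degree v = 3) (S : Set V) :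
    KDominatingSet G 3 S ↔ ∀ ⦃u v⦄, G.Adj u v → u ∈ S ∨ v ∈ S := by
  constructor
  · intro h u v huv
    by_contra hn
    push_neg at hn
    have h1 : S ∩ G.neighborSet u ⊆ G.neighborSet u \ {v} := by
      intro w hw
      exact ⟨hw.2, by rintro rfl; exact hn.2 hw.1⟩
    have hv : v ∈ G.neighborSet u := (G.mem_neighborSet u v).mpr huv
    have h2 : (G.neighborSet u \ {v}).ncard = 2 := by
      rw [Set.ncard_diff_singleton_of_mem hv, ncard_nbhd, h3]
    have := Set.ncard_le_ncard h1 (Set.toFinite _)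
    have h4 := h u hn.1
    omega
  · intro h v hv
    have hsub : G.neighborSet v ⊆ S := by
      intro w hw
      rcases h ((G.mem_neighborSet v w).mp hw) with h' | h'
      · exact absurd h' hv
      · exact h'
    have : S ∩ G.neighborSet v = G.neighborSet v := Set.inter_eq_self_of_subset_right hsub
    rw [this, ncard_nbhd, h3]

private lemma dom_union_colorable (h3 : ∀ v, G.degree v = 3) {U1 U2 : Set V}
    (h1 : KDominatingSet G 3 U1) (h2 : KDominatingSet G 3 U2) (hd : Disjoint U1 U2) :
    G.Colorable 2 := by
  classical
  refine ⟨SimpleGraph.Coloring.mk (fun v => if v ∈ U1 then 0 else 1) ?_⟩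
  intro u v huv hfe
  by_cases hu : u ∈ U1 <;> by_cases hv : v ∈ U1
  · rcases (dom_iff G h3 U2).1 h2 huv with h | h
    · exact (Set.disjoint_left.mp hd hu) h
    · exact (Set.disjoint_left.mp hd hv) h
  · simp [hu, hv] at hfe
  · simp [hu, hv] at hfe
  · rcases (dom_iff G h3 U1).1 h1 huv with h | h
    · exact hu h
    · exact hv h

private lemma dom3_colorable (h3 : ∀ v, G.degree v = 3) {A : Set V}
    (hA : KDominatingSet G 3 A) (hcard : A.ncard = 3) {b c d : V}
    (hb : b ∉ A) (hc : c ∉ A) (hd : d ∉ A)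
    (hbc : b ≠ c) (hbd : b ≠ d) (hcd : c ≠ d) : G.Colorable 2 := by
  classical
  have key1 : ∀ v ∉ A, G.neighborSet v = A := by
    intro v hv
    have hsub : G.neighborSet v ⊆ A := by
      intro w hw
      rcases (dom_iff G h3 A).1 hA ((G.mem_neighborSet v w).mp hw) with h | h
      · exact absurd h hv
      · exact h
    refine Set.eq_of_subset_of_ncard_le hsub ?_ (Set.toFinite _)
    rw [hcard, ncard_nbhd, h3]
  have key2 : ∀ a ∈ A, G.neighborSet a = {b, c, d} := by
    intro a ha
    have hsub : ({b, c, d} : Set V) ⊆ G.neighborSet a := by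
      intro w hw
      have hw' : w ∉ A := by
        rcases hw with rfl | rfl | rfl <;> assumption
      have : a ∈ G.neighborSet w := by rw [key1 w hw']; exact ha
      exact (G.mem_neighborSet a w).mpr ((G.mem_neighborSet w a).mp this).symm
    have hc3 : ({b, c, d} : Set V).ncard = 3 := by
      rw [Set.ncard_insert_of_notMem (by simp [hbc, hbd]) (Set.toFinite _),
        Set.ncard_insert_of_notMem (by simp [hcd]) (Set.toFinite _), Set.ncard_singleton]
    refine (Set.eq_of_subset_of_ncard_le hsub ?_ (Set.toFinite _)).symm
    rw [hc3, ncard_nbhd, h3]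
  refine ⟨SimpleGraph.Coloring.mk (fun v => if v ∈ A then 0 else 1) ?_⟩
  intro u v huv hfe
  by_cases hu : u ∈ A <;> by_cases hv : v ∈ A
  · have : v ∈ G.neighborSet u := (G.mem_neighborSet u v).mpr huv
    rw [key2 u hu] at this
    rcases this with rfl | rfl | rfl <;> [exact hb hv; exact hc hv; exact hd hv]
  · simp [hu, hv] at hfe
  · simp [hu, hv] at hfe
  · have : v ∈ G.neighborSet u := (G.mem_neighborSet u v).mpr huv
    rw [key1 u hu] at this
    exact hv this

private lemma exists_notmem3 {α : Type*} {s : Finset α} (h : 4 ≤ s.card) (a b c : α) :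
    ∃ d ∈ s, d ≠ a ∧ d ≠ b ∧ d ≠ c := by
  classical
  by_contra hn
  push_neg at hn
  have hsub : s ⊆ {a, b, c} := by
    intro x hx
    simp only [Finset.mem_insert, Finset.mem_singleton]
    rcases eq_or_ne x a with rfl | h1
    · exact Or.inl rfl
    rcases eq_or_ne x b with rfl | h2
    · exact Or.inr (Or.inl rfl)
    exact Or.inr (Or.inr (hn x hx h1 h2))
  have h1 := Finset.card_le_card hsub
  have h3 : ({a, b, c} : Finset α).card ≤ 3 := by
    apply le_trans (Finset.card_insert_le _ _)
    have := Finset.card_insert_le b ({c} : Finset α)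
    simp at this ⊢
    omega
  omega

private lemma kcoalition_symm {V : Type*} {G : SimpleGraph V} {k : ℕ} {A B : Set V}
    (h : KCoalition G k A B) : KCoalition G k B A :=
  ⟨h.1.symm, h.2.2.1, h.2.1, Set.union_comm A B ▸ h.2.2.2⟩

/-- Upper bound: any 3-coalition partition of a cubic non-bipartite graph
has at most 3 parts. -/
private lemma upper_bound (h3 : ∀ v, G.degree v = 3) (hbip : ¬ G.Colorable 2)
    {P : Finset (Set V)} (hP : KCoalitionPartition G 3 P) : P.card ≤ 3 := by
  classical
  by_contra hcard
  push_neg at hcard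
  have h4 : 4 ≤ P.card := hcard
  obtain ⟨hne, hdisj, hcov, hparts⟩ := hP
  -- membership exclusion
  have hnotmem : ∀ {x : V} {X S : Set V}, X ∈ P → S ∈ P → X ≠ S → x ∈ X → x ∉ S := by
    intro x X S hX hS hXS hx
    exact Set.disjoint_left.mp (hdisj hX hS hXS) hx
  -- every vertex is in some part
  have hcov' : ∀ v : V, ∃ X ∈ P, v ∈ X := by
    intro v
    have : v ∈ ⋃ A ∈ P, A := by rw [hcov]; trivial
    simpa using this
  -- no part is dominating
  have hnodom : ∀ A ∈ P, ¬ KDominatingSet G 3 A := by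
    intro A hA hdom
    rcases hparts A hA with ⟨_, hcA⟩ | ⟨B, hB, hBA, hco⟩
    · -- three other parts give three outside vertices
      obtain ⟨B, hB, hBA, -, -⟩ := exists_notmem3 h4 A A A
      obtain ⟨C, hC, hCA, hCB, -⟩ := exists_notmem3 h4 A B B
      obtain ⟨D, hD, hDA, hDB, hDC⟩ := exists_notmem3 h4 A B C
      obtain ⟨b, hb⟩ := hne B hB
      obtain ⟨c, hc⟩ := hne C hC
      obtain ⟨d, hd⟩ := hne D hD
      have hbA : b ∉ A := hnotmem hB hA hBA hb
      have hcA' : c ∉ A := hnotmem hC hA hCA hc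
      have hdA : d ∉ A := hnotmem hD hA hDA hd
      have hbc : b ≠ c := fun h => (hnotmem hB hC (fun e => hCB e.symm) hb) (h ▸ hc)
      have hbd : b ≠ d := fun h => (hnotmem hB hD (fun e => hDB e.symm) hb) (h ▸ hd)
      have hcd : c ≠ d := fun h => (hnotmem hC hD (fun e => hDC e.symm) hc) (h ▸ hd)
      exact hbip (dom3_colorable G h3 hdom hcA hbA hcA' hdA hbc hbd hcd)
    · exact hco.2.1 hdom
  -- every part has a coalition partner
  have hpartner : ∀ A ∈ P, ∃ B ∈ P, B ≠ A ∧ KCoalition G 3 A B := by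
    intro A hA
    rcases hparts A hA with ⟨hdom, _⟩ | h
    · exact absurd hdom (hnodom A hA)
    · exact h
  -- tool T: two disjoint coalition pairs give 2-colorability
  have hT : ∀ {X Y S T' : Set V}, X ∈ P → Y ∈ P → S ∈ P → T' ∈ P →
      X ≠ S → X ≠ T' → Y ≠ S → Y ≠ T' →
      KCoalition G 3 X Y → KCoalition G 3 S T' → False := by
    intro X Y S T' hX hY hS hT' hXS hXT' hYS hYT' hco1 hco2
    have hd : Disjoint (X ∪ Y) (S ∪ T') := by
      rw [Set.disjoint_union_left]
      constructor <;> rw [Set.disjoint_union_right]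
      · exact ⟨hdisj hX hS hXS, hdisj hX hT' hXT'⟩
      · exact ⟨hdisj hY hS hYS, hdisj hY hT' hYT'⟩
    exact hbip (dom_union_colorable G h3 hco1.2.2.2 hco2.2.2.2 hd)
  -- star argument
  have hstar : ∀ Z W0 : Set V, Z ∈ P → W0 ∈ P → W0 ≠ Z → KCoalition G 3 W0 Z →
      (∀ X ∈ P, X ≠ Z → X ≠ W0 → KCoalition G 3 X Z) → False := by
    intro Z W0 hZ hW0 hW0Z hcoW0 hleaf
    have hdomZ : KDominatingSet G 3 Z := by
      rw [dom_iff G h3]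
      intro u v huv
      by_contra hn
      push_neg at hn
      obtain ⟨X, hX, hu⟩ := hcov' u
      obtain ⟨Y, hY, hv⟩ := hcov' v
      have hXZ : X ≠ Z := fun e => hn.1 (e ▸ hu)
      have hYZ : Y ≠ Z := fun e => hn.2 (e ▸ hv)
      obtain ⟨W, hW, hWZ, hWX, hWY⟩ := exists_notmem3 h4 Z X Y
      rcases eq_or_ne W W0 with rfl | hWW0
      · -- use pair (W0, Z)
        have hdom := hcoW0.2.2.2
        rcases (dom_iff G h3 _).1 hdom huv with h | h
        · rcases h with h | h
          · exact hnotmem hX hW (Ne.symm hWX) hu h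
          · exact hnotmem hX hZ hXZ hu h
        · rcases h with h | h
          · exact hnotmem hY hW (Ne.symm hWY) hv h
          · exact hnotmem hY hZ hYZ hv h
      · have hcoW := hleaf W hW hWZ hWW0
        have hdom := hcoW.2.2.2
        rcases (dom_iff G h3 _).1 hdom huv with h | h
        · rcases h with h | h
          · exact hnotmem hX hW (Ne.symm hWX) hu h
          · exact hnotmem hX hZ hXZ hu h
        · rcases h with h | h
          · exact hnotmem hY hW (Ne.symm hWY) hv h
          · exact hnotmem hY hZ hYZ hv h
    exact hcoW0.2.2.1 hdomZ
  -- pick A and its partner A'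
  have hPne : P.Nonempty := Finset.card_pos.mp (by omega)
  obtain ⟨A, hA⟩ := hPne
  obtain ⟨A', hA', hA'A, hcoA⟩ := hpartner A hA
  -- every other part's partner is A or A'
  have claim1 : ∀ X ∈ P, X ≠ A → X ≠ A' → (KCoalition G 3 X A ∨ KCoalition G 3 X A') := by
    intro X hX h1 h2
    obtain ⟨Y, hY, hYX, hcoX⟩ := hpartner X hX
    rcases eq_or_ne Y A with rfl | hYA
    · exact Or.inl hcoX
    rcases eq_or_ne Y A' with rfl | hYA'
    · exact Or.inr hcoX
    exact absurd (hT hX hY hA hA' h1 h2 hYA hYA' hcoX hcoA) id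
  -- split into two star cases
  by_cases hcase : ∀ X ∈ P, X ≠ A → X ≠ A' → KCoalition G 3 X A
  · exact hstar A A' hA hA' hA'A (kcoalition_symm hcoA) hcase
  · push_neg at hcase
    obtain ⟨X0, hX0, hX0A, hX0A', hX0n⟩ := hcase
    have hX0co : KCoalition G 3 X0 A' := by
      rcases claim1 X0 hX0 hX0A hX0A' with h | h
      · exact absurd h hX0n
      · exact h
    have hall : ∀ X ∈ P, X ≠ A' → X ≠ A → KCoalition G 3 X A' := by
      intro X hX h1 h2
      rcases claim1 X hX h2 h1 with h | h
      · -- X coalitions with A; X ≠ X0 since X0 doesn't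
        have hXX0 : X ≠ X0 := fun e => hX0n (e ▸ h)
        exact absurd (hT hX hA hX0 hA' hXX0 h1 hX0A.symm hA'A.symm h hX0co) id
      · exact h
    exact hstar A' A hA' hA (Ne.symm hA'A) hcoA hall

end Aux

theorem c3_cubic_not_bipartite {V : Type*} [Fintype V] [Nonempty V] (G : SimpleGraph V)
    [DecidableRel G.Adj] (hcubic : ∀ v : V, G.degree v = 3)
    (hbip : ¬ G.Colorable 2) :
    kCoalitionNumber G 3 = 3 := by
  classical
  -- construct a 3-coalition partition of size 3
  obtain ⟨v⟩ := (inferInstance : Nonempty V)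
  have hdegv : 0 < G.degree v := by rw [hcubic]; omega
  have hnb : 0 < (G.neighborFinset v).card := by
    rw [G.card_neighborFinset_eq_degree, hcubic]; omega
  obtain ⟨u, hu⟩ := Finset.card_pos.mp hnb
  have hvu : G.Adj v u := by rwa [SimpleGraph.mem_neighborFinset] at hu
  have hvne : v ≠ u := hvu.ne
  -- x : another neighbor of v
  obtain ⟨x, hx, hxu⟩ : ∃ x ∈ G.neighborFinset v, x ≠ u := by
    apply Finset.exists_mem_ne
    rw [G.card_neighborFinset_eq_degree, hcubic]; omega
  have hvx : G.Adj v x := by rwa [SimpleGraph.mem_neighborFinset] at hx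
  have hxv : x ≠ v := hvx.ne'
  -- w : a neighbor of u other than v
  obtain ⟨w, hw, hwv⟩ : ∃ w ∈ G.neighborFinset u, w ≠ v := by
    apply Finset.exists_mem_ne
    rw [G.card_neighborFinset_eq_degree, hcubic]; omega
  have huw : G.Adj u w := by rwa [SimpleGraph.mem_neighborFinset] at hw
  have hwu : w ≠ u := huw.ne'
  set A : Set V := {v} with hAdef
  set B : Set V := {u} with hBdef
  set C : Set V := ({u, v} : Set V)ᶜ with hCdef
  have hvC : v ∉ C := by simp [hCdef]
  have huC : u ∉ C := by simp [hCdef]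
  have hxC : x ∈ C := by simp [hCdef, hxu, hxv]
  have hAB : A ≠ B := by simp [hAdef, hBdef, hvne]
  have hAC : A ≠ C := fun h => hvC (h ▸ (rfl : v ∈ A))
  have hBC : B ≠ C := fun h => huC (h ▸ (rfl : u ∈ B))
  -- non-domination facts
  have hAd : ¬ KDominatingSet G 3 A := by
    intro h
    rcases (dom_iff G hcubic A).1 h huw with h' | h'
    · exact hvne (Set.mem_singleton_iff.mp h').symm
    · exact hwv (Set.mem_singleton_iff.mp h')
  have hBd : ¬ KDominatingSet G 3 B := by
    intro h
    rcases (dom_iff G hcubic B).1 h hvx with h' | h'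
    · exact hvne (Set.mem_singleton_iff.mp h')
    · exact hxu (Set.mem_singleton_iff.mp h')
  have hCd : ¬ KDominatingSet G 3 C := by
    intro h
    rcases (dom_iff G hcubic C).1 h hvu with h' | h'
    · exact hvC h'
    · exact huC h'
  have hdomAC : KDominatingSet G 3 (A ∪ C) := by
    rw [dom_iff G hcubic]
    intro s t hst
    by_cases hs : s = u
    · right
      have htu : t ≠ u := fun h => hst.ne (hs.trans h.symm)
      by_cases htv : t = v
      · exact Or.inl (htv ▸ rfl)
      · exact Or.inr (by simp [hCdef, htu, htv])
    · left
      by_cases hsv : s = v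
      · exact Or.inl (hsv ▸ rfl)
      · exact Or.inr (by simp [hCdef, hs, hsv])
  have hdomBC : KDominatingSet G 3 (B ∪ C) := by
    rw [dom_iff G hcubic]
    intro s t hst
    by_cases hs : s = v
    · right
      have htv : t ≠ v := fun h => hst.ne (hs.trans h.symm)
      by_cases htu : t = u
      · exact Or.inl (htu ▸ rfl)
      · exact Or.inr (by simp [hCdef, htu, htv])
    · left
      by_cases hsu : s = u
      · exact Or.inl (hsu ▸ rfl)
      · exact Or.inr (by simp [hCdef, hsu, hs])
  have hdAC : Disjoint A C := by
    simp [hAdef, hCdef, Set.disjoint_left]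
  have hdBC : Disjoint B C := by
    simp [hBdef, hCdef, Set.disjoint_left]
  have hcoAC : KCoalition G 3 A C := ⟨hdAC, hAd, hCd, hdomAC⟩
  have hcoBC : KCoalition G 3 B C := ⟨hdBC, hBd, hCd, hdomBC⟩
  set P : Finset (Set V) := {A, B, C} with hPdef
  have hAP : A ∈ P := by simp [hPdef]
  have hBP : B ∈ P := by simp [hPdef]
  have hCP : C ∈ P := by simp [hPdef]
  have hPcard : P.card = 3 := by
    rw [hPdef, Finset.card_insert_of_notMem (by simp [hAB, hAC]),
      Finset.card_insert_of_notMem (by simp [hBC]), Finset.card_singleton]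
  have hPpart : KCoalitionPartition G 3 P := by
    refine ⟨?_, ?_, ?_, ?_⟩
    · intro X hX
      rw [hPdef] at hX
      simp only [Finset.mem_insert, Finset.mem_singleton] at hX
      rcases hX with rfl | rfl | rfl
      · exact ⟨v, rfl⟩
      · exact ⟨u, rfl⟩
      · exact ⟨x, hxC⟩
    · intro X hX Y hY hXY
      simp only [hPdef, Finset.coe_insert, Finset.coe_singleton, Set.mem_insert_iff,
        Set.mem_singleton_iff] at hX hY
      have hdAB : Disjoint A B := by simp [hAdef, hBdef, Set.disjoint_left, hvne]
      rcases hX with rfl | rfl | rfl <;> rcases hY with rfl | rfl | rfl <;>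
        first
          | exact absurd rfl hXY
          | exact hdAB
          | exact hdAB.symm
          | exact hdAC
          | exact hdAC.symm
          | exact hdBC
          | exact hdBC.symm
    · apply Set.eq_univ_iff_forall.mpr
      intro s
      simp only [Set.mem_iUnion]
      by_cases hsu : s = u
      · exact ⟨B, ⟨hBP, hsu ▸ rfl⟩⟩
      by_cases hsv : s = v
      · exact ⟨A, ⟨hAP, hsv ▸ rfl⟩⟩
      · exact ⟨C, ⟨hCP, by simp [hCdef, hsu, hsv]⟩⟩
    · intro X hX
      rw [hPdef] at hX
      simp only [Finset.mem_insert, Finset.mem_singleton] at hX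
      rcases hX with rfl | rfl | rfl
      · exact Or.inr ⟨C, hCP, (Ne.symm hAC), hcoAC⟩
      · exact Or.inr ⟨C, hCP, (Ne.symm hBC), hcoBC⟩
      · exact Or.inr ⟨A, hAP, hAC, kcoalition_symm hcoAC⟩
  -- conclude
  have hmem : 3 ∈ {n | ∃ Q : Finset (Set V), KCoalitionPartition G 3 Q ∧ Q.card = n} :=
    ⟨P, hPpart, hPcard⟩
  have hub : ∀ n ∈ {n | ∃ Q : Finset (Set V), KCoalitionPartition G 3 Q ∧ Q.card = n}, n ≤ 3 := by
    rintro n ⟨Q, hQ, rfl⟩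
    exact upper_bound G hcubic hbip hQ
  refine le_antisymm (csSup_le ⟨3, hmem⟩ hub) (le_csSup ⟨3, hub⟩ hmem)
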